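/- Let B_T ~ N(0,T) with T > 0, σ > 0, and let a = (ρ - μ + σ²/2)T/σ with ρ, μ ∈ ℝ and μ > ρ. Then M·Pr{B_T ≤ a}·e^{ρT} + M·E[𝟙{B_T > a}·exp((μ - σ²/2)T + σ B_T)] > M·e^{μT} for any M > 0. -/

import Mathlib

open MeasureTheory ProbabilityTheory Real
open scoped ENNReal NNReal

lemma pdf_mul_exp_key (T ρ μ σ : ℝ) (hT : 0 < T) (hσ : 0 < σ) (x : ℝ) :
    gaussianPDFReal 0 T.toNNReal x * Real.exp ((μ - σ ^ 2 / 2) * T + σ * x)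
      = Real.exp (μ * T) * gaussianPDFReal (σ * T) T.toNNReal x := by
  have hv : (T.toNNReal : ℝ) = T := Real.coe_toNNReal _ hT.le
  unfold gaussianPDFReal
  rw [hv]
  have hexp : Real.exp (-(x - 0) ^ 2 / (2 * T)) * Real.exp ((μ - σ ^ 2 / 2) * T + σ * x)
      = Real.exp (μ * T) * Real.exp (-(x - σ * T) ^ 2 / (2 * T)) := by
    rw [← Real.exp_add, ← Real.exp_add]
    congr 1
    field_simp
    ring
  calc (√(2 * π * T))⁻¹ * Real.exp (-(x - 0) ^ 2 / (2 * T))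
        * Real.exp ((μ - σ ^ 2 / 2) * T + σ * x)
      = (√(2 * π * T))⁻¹ * (Real.exp (-(x - 0) ^ 2 / (2 * T))
        * Real.exp ((μ - σ ^ 2 / 2) * T + σ * x)) := by ring
    _ = (√(2 * π * T))⁻¹ * (Real.exp (μ * T) * Real.exp (-(x - σ * T) ^ 2 / (2 * T))) := by
        rw [hexp]
    _ = Real.exp (μ * T) * ((√(2 * π * T))⁻¹ * Real.exp (-(x - σ * T) ^ 2 / (2 * T))) := by ring

theorem rv_insider_gt_honest (M T ρ μ σ : ℝ) (hM : 0 < M) (hT : 0 < T) (hσ : 0 < σ)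
    (hμρ : μ > ρ) (a : ℝ) (ha : a = (ρ - μ + σ ^ 2 / 2) * T / σ) :
    M * ((gaussianReal 0 T.toNNReal) {x | x ≤ a}).toReal * Real.exp (ρ * T)
      + M * ∫ x in Set.Ioi a, Real.exp ((μ - σ ^ 2 / 2) * T + σ * x) ∂(gaussianReal 0 T.toNNReal)
      > M * Real.exp (μ * T) := by
  have hv0 : T.toNNReal ≠ 0 := by
    simp only [ne_eq, Real.toNNReal_eq_zero, not_le]
    exact hT
  set p : ℝ → ℝ := gaussianPDFReal 0 T.toNNReal with hp
  set g : ℝ → ℝ := fun x => Real.exp ((μ - σ ^ 2 / 2) * T + σ * x) with hg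
  have hpg : ∀ x, p x * g x = Real.exp (μ * T) * gaussianPDFReal (σ * T) T.toNNReal x :=
    fun x => pdf_mul_exp_key T ρ μ σ hT hσ x
  have hσa : σ * a = (ρ - μ + σ ^ 2 / 2) * T := by
    rw [ha]; field_simp
  have hga : ∀ x ≤ a, g x ≤ Real.exp (ρ * T) := by
    intro x hx
    apply Real.exp_le_exp.2
    nlinarith [mul_le_mul_of_nonneg_left hx hσ.le]
  have hga' : ∀ x < a, g x < Real.exp (ρ * T) := by
    intro x hx
    apply Real.exp_lt_exp.2
    nlinarith [mul_lt_mul_of_pos_left hx hσ]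
  have hint_pg : Integrable (fun x => p x * g x) := by
    have : (fun x => p x * g x)
        = fun x => Real.exp (μ * T) * gaussianPDFReal (σ * T) T.toNNReal x := funext hpg
    rw [this]
    exact (integrable_gaussianPDFReal _ _).const_mul _
  have hint_p : Integrable p := integrable_gaussianPDFReal _ _
  have htotal : ∫ x, p x * g x = Real.exp (μ * T) := by
    simp_rw [hpg]
    rw [integral_const_mul, integral_gaussianPDFReal_eq_one _ hv0, mul_one]
  have hmeas : gaussianReal 0 T.toNNReal = volume.withDensity (gaussianPDF 0 T.toNNReal) :=
    gaussianReal_of_var_ne_zero _ hv0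
  have hdens : (∫ x in Set.Ioi a, g x ∂(gaussianReal 0 T.toNNReal))
      = ∫ x in Set.Ioi a, p x * g x := by
    rw [hmeas]
    have hd : gaussianPDF 0 T.toNNReal = fun x => ((p x).toNNReal : ℝ≥0∞) := rfl
    rw [hd, restrict_withDensity measurableSet_Ioi,
      integral_withDensity_eq_integral_smul
        ((measurable_gaussianPDFReal 0 T.toNNReal).real_toNNReal)]
    congr 1
    funext x
    rw [NNReal.smul_def, smul_eq_mul, Real.coe_toNNReal _ (gaussianPDFReal_nonneg _ _ _)]
  have hprob : ((gaussianReal 0 T.toNNReal) {x | x ≤ a}).toReal = ∫ x in Set.Iic a, p x := by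
    have hset : {x : ℝ | x ≤ a} = Set.Iic a := rfl
    rw [hset, gaussianReal_apply_eq_integral _ hv0,
      ENNReal.toReal_ofReal (integral_nonneg fun x => gaussianPDFReal_nonneg _ _ _)]
  have hsplit : (∫ x in Set.Iic a, p x * g x) + (∫ x in Set.Ioi a, p x * g x)
      = Real.exp (μ * T) := by
    rw [← htotal]
    exact intervalIntegral.integral_Iic_add_Ioi hint_pg.integrableOn hint_pg.integrableOn
  have hdiff : 0 < ∫ x in Set.Iic a, (p x * Real.exp (ρ * T) - p x * g x) := by
    set f : ℝ → ℝ := fun x => p x * Real.exp (ρ * T) - p x * g x with hf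
    have hfi : IntegrableOn f (Set.Iic a) :=
      ((hint_p.mul_const _).sub hint_pg).integrableOn
    have hnn : 0 ≤ᵐ[volume.restrict (Set.Iic a)] f := by
      filter_upwards [ae_restrict_mem measurableSet_Iic] with x hx
      have h1 := hga x hx
      have hp0 : 0 ≤ p x := gaussianPDFReal_nonneg _ _ _
      simp only [hf, Pi.zero_apply, sub_nonneg]
      exact mul_le_mul_of_nonneg_left h1 hp0
    rw [setIntegral_pos_iff_support_of_nonneg_ae hnn hfi]
    have hsub : Set.Iio a ⊆ Function.support f ∩ Set.Iic a := by
      intro x hx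
      have hx' : x < a := hx
      refine ⟨?_, le_of_lt hx'⟩
      have hp0 : 0 < p x := gaussianPDFReal_pos _ _ _ hv0
      have h2 := hga' x hx'
      simp only [hf, Function.mem_support, ne_eq, sub_eq_zero]
      intro h
      have h3 := mul_lt_mul_of_pos_left h2 hp0
      rw [h] at h3
      exact lt_irrefl _ h3
    calc (0 : ℝ≥0∞) < volume (Set.Iio a) := by simp
      _ ≤ volume (Function.support f ∩ Set.Iic a) := measure_mono hsub
  have hsubint : (∫ x in Set.Iic a, (p x * Real.exp (ρ * T) - p x * g x))
      = (∫ x in Set.Iic a, p x * Real.exp (ρ * T)) - ∫ x in Set.Iic a, p x * g x :=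
    integral_sub (hint_p.mul_const _).integrableOn hint_pg.integrableOn
  have hmulr : (∫ x in Set.Iic a, p x * Real.exp (ρ * T))
      = (∫ x in Set.Iic a, p x) * Real.exp (ρ * T) := integral_mul_const _ _
  rw [hdens, hprob]
  nlinarith [hsplit, hdiff, hsubint, hmulr, hM]
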